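/- arXiv:0812.1796 — 2 statements merged into one kernel-verified Lean document; each statement's English description precedes it below -/
import Mathlib

section
/- Let E be a normed linear space, U an arbitrary set, g : U → ℝ and h : U → E. Then there exists a continuous linear functional e* ∈ E* such that g(u) = ⟨e*, h(u)⟩ for all u ∈ U if and only if there exists γ > 0 such that for every n ∈ ℕ, all real numbers β₁,…,βₙ and all points u₁,…,uₙ ∈ U one has |∑_{i=1}^n βᵢ g(uᵢ)| ≤ γ ‖∑_{i=1}^n βᵢ h(uᵢ)‖_E. -/
/-- The moment problem criterion (Lemma on moments): for a normed space `E`, an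
arbitrary set `U`, and functions `g : U → ℝ`, `h : U → E`, there exists a continuous
linear functional `e* ∈ E*` with `g u = ⟨e*, h u⟩` for all `u ∈ U` if and only if
there is `γ > 0` such that for every finite family of reals `β₁,…,βₙ` and points
`u₁,…,uₙ ∈ U` one has `|∑ βᵢ g(uᵢ)| ≤ γ ‖∑ βᵢ h(uᵢ)‖`. -/
theorem moment_problem_criterion {E : Type*} [NormedAddCommGroup E] [NormedSpace ℝ E]
    {U : Type*} (g : U → ℝ) (h : U → E) :
    (∃ e : E →L[ℝ] ℝ, ∀ u : U, g u = e (h u)) ↔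
      (∃ γ : ℝ, 0 < γ ∧ ∀ (n : ℕ) (β : Fin n → ℝ) (u : Fin n → U),
        |∑ i, β i * g (u i)| ≤ γ * ‖∑ i, β i • h (u i)‖) := by
  constructor
  · rintro ⟨e, he⟩
    refine ⟨‖e‖ + 1, by positivity, fun n β u => ?_⟩
    have : ∑ i, β i * g (u i) = e (∑ i, β i • h (u i)) := by
      rw [map_sum]
      refine Finset.sum_congr rfl fun i _ => ?_
      rw [he, map_smul, smul_eq_mul]
    rw [this]
    calc |e (∑ i, β i • h (u i))| ≤ ‖e‖ * ‖∑ i, β i • h (u i)‖ := e.le_opNorm _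
      _ ≤ (‖e‖ + 1) * ‖∑ i, β i • h (u i)‖ := by
          apply mul_le_mul_of_nonneg_right (by linarith) (norm_nonneg _)
  · rintro ⟨γ, hγ, H⟩
    set φ : (U →₀ ℝ) →ₗ[ℝ] ℝ := Finsupp.linearCombination ℝ g with hφdef
    set T : (U →₀ ℝ) →ₗ[ℝ] E := Finsupp.linearCombination ℝ h with hTdef
    -- key: |φ l| ≤ γ * ‖T l‖
    have key : ∀ l : U →₀ ℝ, |φ l| ≤ γ * ‖T l‖ := by
      intro l
      set s := l.support
      let e := s.equivFin.symm
      have hφ : φ l = ∑ i : Fin s.card, l (e i) * g (e i) := by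
        rw [hφdef, Finsupp.linearCombination_apply, Finsupp.sum]
        rw [← Finset.sum_coe_sort s (fun x => l x • g x)]
        rw [← Equiv.sum_comp e (fun x => l x • g x)]
        simp [smul_eq_mul]
      have hT : T l = ∑ i : Fin s.card, l (e i) • h (e i) := by
        rw [hTdef, Finsupp.linearCombination_apply, Finsupp.sum]
        rw [← Finset.sum_coe_sort s (fun x => l x • h x)]
        rw [← Equiv.sum_comp e (fun x => l x • h x)]
      rw [hφ, hT]
      exact H s.card (fun i => l (e i)) (fun i => e i)
    have hker : LinearMap.ker T ≤ LinearMap.ker φ := by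
      intro l hl
      rw [LinearMap.mem_ker] at hl ⊢
      have := key l
      rw [hl, norm_zero, mul_zero] at this
      exact abs_nonpos_iff.mp this
    set p : Submodule ℝ E := LinearMap.range T
    let q := T.quotKerEquivRange
    let f₀ : p →ₗ[ℝ] ℝ := (Submodule.liftQ _ φ hker).comp q.symm.toLinearMap
    have hf₀ : ∀ l : U →₀ ℝ, f₀ ⟨T l, LinearMap.mem_range_self T l⟩ = φ l := by
      intro l
      have : q (Submodule.Quotient.mk l) = ⟨T l, LinearMap.mem_range_self T l⟩ :=
        Subtype.ext (T.quotKerEquivRange_apply_mk l)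
      simp only [f₀, LinearMap.comp_apply, LinearEquiv.coe_toLinearMap, ← this,
        LinearEquiv.symm_apply_apply, Submodule.liftQ_apply]
    have hbound : ∀ x : p, ‖f₀ x‖ ≤ γ * ‖x‖ := by
      rintro ⟨x, hx⟩
      obtain ⟨l, rfl⟩ := hx
      rw [hf₀ l]
      simpa [Real.norm_eq_abs] using key l
    let F : p →L[ℝ] ℝ := f₀.mkContinuous γ hbound
    obtain ⟨e, he, -⟩ := exists_extension_norm_eq p F
    refine ⟨e, fun u => ?_⟩
    have hmem : h u ∈ p := ⟨Finsupp.single u 1, by simp [hTdef]⟩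
    have := he ⟨h u, hmem⟩
    have hFu : F ⟨h u, hmem⟩ = g u := by
      have h1 : (⟨h u, hmem⟩ : p) = ⟨T (Finsupp.single u 1), LinearMap.mem_range_self T _⟩ := by
        ext; simp [hTdef]
      have : F ⟨h u, hmem⟩ = f₀ ⟨h u, hmem⟩ := rfl
      rw [this, h1, hf₀]
      simp [hφdef]
    rw [this, hFu]
end

section
/- Let ν be a measure on ℝ, let x₀ ≠ 0, and let (εₙ)_{n≥1} be a strictly decreasing sequence with εₙ ↓ 0 such that ν(B(x₀,εₙ) \ B(x₀,εₙ₊₁)) > 0 for all n ≥ 1 (so x₀ is a concentration point of ν). Define ψ : ℝ → ℝ by ψ(x) = min(|x|,1) for x in B(x₀,ε_{2k+1}) \ B(x₀,ε_{2k+2}) (k = 0,1,…), ψ(x) = −min(|x|,1) for x in B(x₀,ε_{2k}) \ B(x₀,ε_{2k+1}) (k = 1,2,…), and ψ(x) = min(|x|,1) otherwise. Let E be a normed space and let h : ℝ → E be continuous at x₀. Then there is no continuous linear functional e* ∈ E* such that ψ(x) = ⟨e*, h(x)⟩ for ν-almost every x ∈ ℝ. -/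
open MeasureTheory Metric Set Filter

/-- The key nonrepresentability argument behind the concentration-point
incompleteness theorem: if `x₀ ≠ 0` is a concentration point of `ν` (witnessed by
the strictly decreasing sequence `εₙ ↓ 0` with `ν(B(x₀,εₙ) \ B(x₀,εₙ₊₁)) > 0`),
`ψ` is the alternating function equal to `min(|x|,1)` on the odd annuli
`B(x₀,ε_{2k+1}) \ B(x₀,ε_{2k+2})`, to `-min(|x|,1)` on the even annuli
`B(x₀,ε_{2k}) \ B(x₀,ε_{2k+1})` (`k ≥ 1`), and to `min(|x|,1)` elsewhere, and
`h : ℝ → E` is continuous at `x₀`, then no continuous linear functional `e* ∈ E*`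
satisfies `ψ(x) = ⟨e*, h(x)⟩` for `ν`-almost every `x`. -/
theorem no_representation_of_concentration_point
    {E : Type*} [NormedAddCommGroup E] [NormedSpace ℝ E]
    (ν : Measure ℝ) (x₀ : ℝ) (hx₀ : x₀ ≠ 0)
    (ε : ℕ → ℝ) (hanti : StrictAnti ε) (hlim : Tendsto ε atTop (nhds 0))
    (hν : ∀ n : ℕ, 1 ≤ n → 0 < ν (closedBall x₀ (ε n) \ closedBall x₀ (ε (n + 1))))
    (ψ : ℝ → ℝ)
    (hψodd : ∀ k : ℕ,
      ∀ x ∈ closedBall x₀ (ε (2 * k + 1)) \ closedBall x₀ (ε (2 * k + 2)),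
        ψ x = min |x| 1)
    (hψeven : ∀ k : ℕ, 1 ≤ k →
      ∀ x ∈ closedBall x₀ (ε (2 * k)) \ closedBall x₀ (ε (2 * k + 1)),
        ψ x = -(min |x| 1))
    (hψrest : ∀ x : ℝ,
      (∀ n : ℕ, 1 ≤ n → x ∉ closedBall x₀ (ε n) \ closedBall x₀ (ε (n + 1))) →
        ψ x = min |x| 1)
    (h : ℝ → E) (hcont : ContinuousAt h x₀) :
    ¬ ∃ e : E →L[ℝ] ℝ, ∀ᵐ x ∂ν, ψ x = e (h x) := by

  rintro ⟨e, hae⟩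
  have hgood : ∀ n : ℕ, 1 ≤ n →
      ∃ x ∈ closedBall x₀ (ε n) \ closedBall x₀ (ε (n + 1)), ψ x = e (h x) := by
    intro n hn
    by_contra hcon
    push_neg at hcon
    have hsub : closedBall x₀ (ε n) \ closedBall x₀ (ε (n + 1)) ⊆
        {x | ¬ ψ x = e (h x)} := fun x hx => hcon x hx
    have h0 : ν {x | ¬ ψ x = e (h x)} = 0 := hae
    exact absurd (le_trans (measure_mono hsub) h0.le) (hν n hn).not_ge
  choose b hbA hbψ using fun k => hgood (2 * k + 1) (by omega)
  choose c hcA hcψ using fun k => hgood (2 * k + 2) (by omega)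
  have hodd : Tendsto (fun k : ℕ => ε (2 * k + 1)) atTop (nhds 0) :=
    hlim.comp (tendsto_atTop_atTop.mpr fun m => ⟨m, fun a ha => by omega⟩)
  have heven : Tendsto (fun k : ℕ => ε (2 * k + 2 + 1)) atTop (nhds 0) :=
    hlim.comp (tendsto_atTop_atTop.mpr fun m => ⟨m, fun a ha => by omega⟩)
  have heven' : Tendsto (fun k : ℕ => ε (2 * k + 2)) atTop (nhds 0) :=
    hlim.comp (tendsto_atTop_atTop.mpr fun m => ⟨m, fun a ha => by omega⟩)
  have hb : Tendsto b atTop (nhds x₀) := by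
    rw [tendsto_iff_dist_tendsto_zero]
    exact squeeze_zero (fun k => dist_nonneg)
      (fun k => mem_closedBall.mp (hbA k).1) hodd
  have hc : Tendsto c atTop (nhds x₀) := by
    rw [tendsto_iff_dist_tendsto_zero]
    exact squeeze_zero (fun k => dist_nonneg)
      (fun k => mem_closedBall.mp (hcA k).1) heven'
  have hm : Continuous (fun x : ℝ => min |x| 1) := continuous_abs.min continuous_const
  have hψb : ∀ k, ψ (b k) = min |b k| 1 := fun k => hψodd k (b k) (hbA k)
  have hψc : ∀ k, ψ (c k) = -(min |c k| 1) := by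
    intro k
    have h2 : 2 * (k + 1) = 2 * k + 2 := by ring
    have := hψeven (k + 1) (by omega) (c k)
    rw [h2] at this
    exact this (hcA k)
  have heb : Tendsto (fun k => e (h (b k))) atTop (nhds (e (h x₀))) :=
    (e.continuous.tendsto _).comp (hcont.tendsto.comp hb)
  have hec : Tendsto (fun k => e (h (c k))) atTop (nhds (e (h x₀))) :=
    (e.continuous.tendsto _).comp (hcont.tendsto.comp hc)
  have hψbt : Tendsto (fun k => e (h (b k))) atTop (nhds (min |x₀| 1)) := by
    have : Tendsto (fun k => min |b k| 1) atTop (nhds (min |x₀| 1)) :=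
      (hm.tendsto x₀).comp hb
    refine this.congr fun k => ?_
    rw [← hψb k, hbψ k]
  have hψct : Tendsto (fun k => e (h (c k))) atTop (nhds (-(min |x₀| 1))) := by
    have : Tendsto (fun k => -(min |c k| 1)) atTop (nhds (-(min |x₀| 1))) :=
      ((hm.tendsto x₀).comp hc).neg
    refine this.congr fun k => ?_
    rw [← hψc k, hcψ k]
  have h1 : e (h x₀) = min |x₀| 1 := tendsto_nhds_unique heb hψbt
  have h2 : e (h x₀) = -(min |x₀| 1) := tendsto_nhds_unique hec hψct
  have hpos : 0 < min |x₀| 1 := lt_min (abs_pos.mpr hx₀) one_pos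
  linarith [h1, h2, hpos]
end
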